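/- For the odd cycle C_{2k+1}, the pebbling number equals 2⌊2^(k+1)/3⌋ + 1. -/

import Mathlib

open SimpleGraph

variable {V : Type*}

/-- Apply a pebbling move along the ordered pair `e`. -/
def applyMove [DecidableEq V] (D : V → ℕ) (e : V × V) : V → ℕ :=
  fun w => if w = e.1 then D w - 2 else if w = e.2 then D w + 1 else D w

/-- A list of ordered pairs is a valid pebbling sequence from `D`. -/
def ValidSeq [DecidableEq V] (G : SimpleGraph V) : (V → ℕ) → List (V × V) → Prop
  | _, [] => True
  | D, e :: l => G.Adj e.1 e.2 ∧ 2 ≤ D e.1 ∧ ValidSeq G (applyMove D e) l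

def applySeq [DecidableEq V] (D : V → ℕ) : List (V × V) → (V → ℕ)
  | [] => D
  | e :: l => applySeq (applyMove D e) l

/-- `r` is `m`-reachable under `D`. -/
def Reaches [DecidableEq V] (G : SimpleGraph V) (D : V → ℕ) (r : V) (m : ℕ) : Prop :=
  ∃ l : List (V × V), ValidSeq G D l ∧ m ≤ applySeq D l r

def Solvable [DecidableEq V] (G : SimpleGraph V) (D : V → ℕ) : Prop :=
  ∀ r : V, Reaches G D r 1

noncomputable def pebNumTo [Fintype V] [DecidableEq V] (G : SimpleGraph V) (r : V) : ℕ :=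
  sInf {k : ℕ | ∀ D : V → ℕ, (∑ v, D v) = k → Reaches G D r 1}

noncomputable def pebNum [Fintype V] [DecidableEq V] (G : SimpleGraph V) : ℕ :=
  sInf {k : ℕ | ∀ D : V → ℕ, (∑ v, D v) = k → Solvable G D}

noncomputable def optPebNum [Fintype V] [DecidableEq V] (G : SimpleGraph V) : ℕ :=
  sInf {k : ℕ | ∃ D : V → ℕ, (∑ v, D v) = k ∧ Solvable G D}


namespace Peb

/-- carry chain, near-first ordering: entry at index d sits at distance d+1 from the root. -/
def chain : List ℕ → ℕ
  | [] => 0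
  | a :: l => (a + chain l) / 2

def chainI : List ℕ → ℕ → ℕ
  | [], c => c
  | a :: l, c => (a + chainI l c) / 2

lemma chain_eq_chainI (l : List ℕ) : chain l = chainI l 0 := by
  induction l with
  | nil => rfl
  | cons a l ih => simp [chain, chainI, ih]

lemma chain_append (l l' : List ℕ) : chain (l ++ l') = chainI l (chain l') := by
  induction l with
  | nil => simp [chainI]
  | cons a l ih => simp [chain, chainI, ih]

lemma chainI_mono {l l' : List ℕ} {c c' : ℕ} (h : List.Forall₂ (· ≤ ·) l l') (hc : c ≤ c') :
    chainI l c ≤ chainI l' c' := by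
  induction h with
  | nil => exact hc
  | @cons a b l l' hab h ih =>
      exact Nat.div_le_div_right (Nat.add_le_add hab ih)

lemma chain_mono {l l' : List ℕ} (h : List.Forall₂ (· ≤ ·) l l') : chain l ≤ chain l' := by
  rw [chain_eq_chainI, chain_eq_chainI]; exact chainI_mono h le_rfl

/-- toward move: keep chain equal -/
lemma chain_toward (l l' : List ℕ) (x y : ℕ) (hy : 2 ≤ y) :
    chain (l ++ (x + 1) :: (y - 2) :: l') = chain (l ++ x :: y :: l') := by
  rw [chain_append, chain_append]
  congr 1
  show (x + 1 + (y - 2 + chain l') / 2) / 2 = (x + (y + chain l') / 2) / 2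
  have : y + chain l' = (y - 2 + chain l') + 2 := by omega
  rw [this, Nat.add_div_right _ (by norm_num)]
  omega

/-- away move: chain does not increase -/
lemma chain_away (l l' : List ℕ) (x y : ℕ) (hx : 2 ≤ x) :
    chain (l ++ (x - 2) :: (y + 1) :: l') ≤ chain (l ++ x :: y :: l') := by
  rw [chain_append, chain_append]
  apply chainI_mono (List.forall₂_same.2 (fun _ _ => le_rfl))
  show (x - 2 + (y + 1 + chain l') / 2) / 2 ≤ (x + (y + chain l') / 2) / 2
  have h1 : (y + 1 + chain l') / 2 ≤ (y + chain l') / 2 + 1 := by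
    have : y + 1 + chain l' ≤ y + chain l' + 2 := by omega
    calc (y + 1 + chain l') / 2 ≤ (y + chain l' + 2) / 2 := Nat.div_le_div_right this
    _ = (y + chain l') / 2 + 1 := Nat.add_div_right _ (by norm_num)
  apply Nat.div_le_div_right
  omega

/-- crossing comparison -/
lemma chain_cross (l : List ℕ) (x y : ℕ) (hy : 2 ≤ y) :
    chain (l ++ [x + 1]) ≤ chain (l ++ [x, y]) := by
  rw [chain_append, chain_append]
  apply chainI_mono (List.forall₂_same.2 (fun _ _ => le_rfl))
  show chain [x+1] ≤ chain [x, y]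
  show (x + 1 + 0) / 2 ≤ (x + (y + 0)/2) / 2
  have : 1 ≤ y / 2 := by omega
  apply Nat.div_le_div_right
  omega

/-- pour: merging the far two entries -/
lemma chain_pour (l : List ℕ) (x a : ℕ) :
    chain (l ++ [x, a]) = chain (l ++ [x + a / 2]) := by
  rw [chain_append, chain_append]
  simp [chain]

/-- weighted sum with weight 2^(len-1-d) at index d -/
def wsum : List ℕ → ℕ
  | [] => 0
  | a :: l => a * 2 ^ l.length + wsum l

lemma wsum_bound (l : List ℕ) : wsum l + 1 ≤ 2 ^ l.length * (chain l + 1) := by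
  induction l with
  | nil => simp [wsum, chain]
  | cons a l ih =>
      have h2 : a + chain l + 1 ≤ 2 * ((a + chain l) / 2) + 2 := by omega
      calc wsum (a :: l) + 1 = a * 2 ^ l.length + (wsum l + 1) := by simp [wsum, Nat.add_assoc]
      _ ≤ a * 2 ^ l.length + 2 ^ l.length * (chain l + 1) := by omega
      _ = 2 ^ l.length * (a + chain l + 1) := by ring
      _ ≤ 2 ^ l.length * (2 * ((a + chain l) / 2) + 2) := Nat.mul_le_mul_left _ h2
      _ = 2 ^ (a :: l).length * ((a + chain l) / 2 + 1) := by simp [List.length_cons]; ring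
      _ = 2 ^ (a :: l).length * (chain (a :: l) + 1) := rfl

lemma wsum_append_singleton (l : List ℕ) (a : ℕ) : wsum (l ++ [a]) = 2 * wsum l + a := by
  induction l with
  | nil => simp [wsum]
  | cons x l ih => simp [wsum, ih]; ring

lemma chain_zeros {l : List ℕ} (h : ∀ x ∈ l, x = 0) : chain l = 0 := by
  induction l with
  | nil => rfl
  | cons a l ih =>
      have ha : a = 0 := h a (by simp)
      have := ih (fun x hx => h x (by simp [hx]))
      simp [chain, ha, this]

lemma chain_append_zeros (l l' : List ℕ) (h : ∀ x ∈ l', x = 0) :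
    chain (l ++ l') = chain l := by
  rw [chain_append, chain_zeros h, ← chain_eq_chainI]

lemma chainI_replicate_zero (m c : ℕ) : chainI (List.replicate m 0) c = c / 2 ^ m := by
  induction m with
  | zero => simp [chainI]
  | succ m ih =>
      show (0 + chainI (List.replicate m 0) c) / 2 = c / 2 ^ (m + 1)
      rw [ih, Nat.zero_add, Nat.div_div_eq_div_mul, pow_succ]

lemma chain_replicate_zero_append (m a : ℕ) :
    chain (List.replicate m 0 ++ [a]) = a / 2 ^ (m + 1) := by
  rw [chain_append, chainI_replicate_zero]
  show (a + 0)/2 / 2 ^ m = _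
  rw [Nat.add_zero, Nat.div_div_eq_div_mul, pow_succ]
  ring_nf

section B
/-- pebbles list on the decreasing side of cut `i`: vertices 1..i, near-first -/
def decL (D : ℕ → ℕ) (i : ℕ) : List ℕ := (List.range i).map (fun d => D (d + 1))

/-- pebbles list on the increasing side of cut `i`: vertices n-1 down to i+1, near-first -/
def incL (n : ℕ) (D : ℕ → ℕ) (i : ℕ) : List ℕ :=
  (List.range (n - 1 - i)).map (fun d => D (n - 1 - d))

def cutVal (n : ℕ) (D : ℕ → ℕ) (i : ℕ) : ℕ :=
  D 0 + chain (decL D i) + chain (incL n D i)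

/-- result of a pebbling move at ℕ-level -/
def mv (D : ℕ → ℕ) (u v : ℕ) : ℕ → ℕ :=
  fun j => if j = u then D j - 2 else if j = v then D j + 1 else D j

lemma range_split2 {p m : ℕ} (h : p + 2 ≤ m) :
    List.range m = List.range p ++ p :: (p + 1) :: (List.range (m - p - 2)).map (· + (p + 2)) := by
  have h1 : m = (p + 2) + (m - p - 2) := by omega
  conv_lhs => rw [h1]
  rw [List.range_add, List.range_succ, List.range_succ]
  simp [List.append_assoc, add_comm]

lemma map_range_split2 (f : ℕ → ℕ) {p m : ℕ} (h : p + 2 ≤ m) :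
    (List.range m).map f =
      (List.range p).map f ++ f p :: f (p + 1) ::
        (List.range (m - p - 2)).map (fun d => f (d + (p + 2))) := by
  rw [range_split2 h]
  simp [List.map_map, Function.comp]

lemma map_range_congr {f g : ℕ → ℕ} {m : ℕ} (h : ∀ d < m, f d = g d) :
    (List.range m).map f = (List.range m).map g :=
  List.map_congr_left (fun d hd => h d (List.mem_range.1 hd))

lemma forall₂_map_range {f g : ℕ → ℕ} {m : ℕ} (h : ∀ d < m, f d ≤ g d) :
    List.Forall₂ (· ≤ ·) ((List.range m).map f) ((List.range m).map g) := by
  rw [List.forall₂_map_left_iff, List.forall₂_map_right_iff]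
  exact List.forall₂_same.2 (fun d hd => h d (List.mem_range.1 hd))

lemma decL_succ (D : ℕ → ℕ) (i : ℕ) : decL D (i + 1) = decL D i ++ [D (i + 1)] := by
  unfold decL
  rw [List.range_succ]
  simp

lemma incL_last {n : ℕ} (D : ℕ → ℕ) {i : ℕ} (h : i + 2 ≤ n) :
    incL n D i = incL n D (i + 1) ++ [D (i + 1)] := by
  unfold incL
  have h1 : n - 1 - i = (n - 1 - (i + 1)) + 1 := by omega
  rw [h1, List.range_succ]
  have h2 : n - 1 - (n - 1 - (i + 1)) = i + 1 := by omega
  simp [h2]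

end B



section Helpers

lemma chain_congr {f f' : ℕ → ℕ} {m : ℕ} (h : ∀ d < m, f' d = f d) :
    chain ((List.range m).map f') = chain ((List.range m).map f) := by
  rw [map_range_congr h]

lemma chain_update2_toward (f f' : ℕ → ℕ) {p m : ℕ} (h : p + 2 ≤ m)
    (hpre : ∀ d < m, d ≠ p → d ≠ p + 1 → f' d = f d)
    (hp : f' p = f p + 1) (hp1 : f' (p + 1) = f (p + 1) - 2) (h2 : 2 ≤ f (p + 1)) :
    chain ((List.range m).map f') = chain ((List.range m).map f) := by
  rw [map_range_split2 f' h, map_range_split2 f h, hp, hp1]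
  rw [map_range_congr (f := f') (g := f) (fun d hd => hpre d (by omega) (by omega) (by omega))]
  rw [map_range_congr (f := fun d => f' (d + (p + 2))) (g := fun d => f (d + (p + 2)))
      (fun d hd => hpre (d + (p + 2)) (by omega) (by omega) (by omega))]
  exact chain_toward _ _ _ _ h2

lemma chain_update2_away (f f' : ℕ → ℕ) {p m : ℕ} (h : p + 2 ≤ m)
    (hpre : ∀ d < m, d ≠ p → d ≠ p + 1 → f' d = f d)
    (hp : f' p = f p - 2) (hp1 : f' (p + 1) = f (p + 1) + 1) (h2 : 2 ≤ f p) :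
    chain ((List.range m).map f') ≤ chain ((List.range m).map f) := by
  rw [map_range_split2 f' h, map_range_split2 f h, hp, hp1]
  rw [map_range_congr (f := f') (g := f) (fun d hd => hpre d (by omega) (by omega) (by omega))]
  rw [map_range_congr (f := fun d => f' (d + (p + 2))) (g := fun d => f (d + (p + 2)))
      (fun d hd => hpre (d + (p + 2)) (by omega) (by omega) (by omega))]
  exact chain_away _ _ _ _ h2

lemma chain_update_mono (f f' : ℕ → ℕ) {m : ℕ} (h : ∀ d < m, f' d ≤ f d) :
    chain ((List.range m).map f') ≤ chain ((List.range m).map f) :=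
  chain_mono (forall₂_map_range h)

lemma chain_cross_helper (f f' : ℕ → ℕ) {m : ℕ} (hm : 1 ≤ m)
    (hpre : ∀ d < m - 1, f' d = f d)
    (hlast : f' (m - 1) = f (m - 1) + 1) (h2 : 2 ≤ f m) :
    chain ((List.range m).map f') ≤ chain ((List.range (m + 1)).map f) := by
  have e1 : (List.range (m + 1)).map f
      = (List.range (m - 1)).map f ++ [f (m - 1), f m] := by
    have : m + 1 = (m - 1) + 1 + 1 := by omega
    rw [this, List.range_succ, List.range_succ]
    have : m - 1 + 1 = m := by omega
    simp [this]
  have e2 : (List.range m).map f'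
      = (List.range (m - 1)).map f ++ [f (m - 1) + 1] := by
    have hm' : m = (m - 1) + 1 := by omega
    conv_lhs => rw [hm']
    rw [List.range_succ]
    rw [List.map_append, map_range_congr hpre]
    simp [hlast]
  rw [e1, e2]
  exact chain_cross _ _ _ h2

end Helpers


section Invariant

lemma mv_self {D : ℕ → ℕ} {u v : ℕ} : mv D u v u = D u - 2 := by simp [mv]

lemma mv_tgt {D : ℕ → ℕ} {u v : ℕ} (h : v ≠ u) : mv D u v v = D v + 1 := by simp [mv, h]

lemma mv_ne {D : ℕ → ℕ} {u v j : ℕ} (h1 : j ≠ u) (h2 : j ≠ v) : mv D u v j = D j := by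
  simp [mv, h1, h2]

lemma invariant {n : ℕ} (hn : 3 ≤ n) {D : ℕ → ℕ} (H : ∀ i < n, cutVal n D i = 0)
    {u v : ℕ} (h2 : 2 ≤ D u)
    (adj : (u + 1 < n ∧ v = u + 1) ∨ (u = n - 1 ∧ v = 0) ∨
      (v + 1 < n ∧ u = v + 1) ∨ (v = n - 1 ∧ u = 0)) :
    ∀ i < n, cutVal n (mv D u v) i = 0 := by
  have Hdec : ∀ i, i < n → chain (decL D i) = 0 := by
    intro i hi; have := H i hi; unfold cutVal at this; omega
  have Hinc : ∀ i, i < n → chain (incL n D i) = 0 := by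
    intro i hi; have := H i hi; unfold cutVal at this; omega
  have HD0 : D 0 = 0 := by
    have := H 0 (by omega); unfold cutVal at this; omega
  have hu0 : u ≠ 0 := by intro h; rw [h, HD0] at h2; omega
  rcases adj with ⟨hun, rfl⟩ | ⟨hu, hv⟩ | ⟨hvn, rfl⟩ | ⟨hv, hu⟩
  · -- v = u + 1, increasing move
    have hu1 : 1 ≤ u := by omega
    intro i hi
    have hD'0 : mv D u (u + 1) 0 = 0 := by rw [mv_ne (by omega) (by omega)]; exact HD0
    rcases lt_trichotomy i u with hiu | rfl | hiu
    · -- i < u : dec unchanged, inc toward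
      have hd : chain (decL (mv D u (u + 1)) i) = 0 := by
        unfold decL
        rw [chain_congr (f := fun d => D (d + 1)) (fun d hd => mv_ne (by omega) (by omega))]
        exact Hdec i hi
      have hc : chain (incL n (mv D u (u + 1)) i) = 0 := by
        unfold incL
        rw [chain_update2_toward (fun d => D (n - 1 - d)) _ (p := n - 2 - u) (by omega)
          (fun d hd hd1 hd2 => mv_ne (by omega) (by omega))
          (by show mv D u (u + 1) (n - 1 - (n - 2 - u)) = D (n - 1 - (n - 2 - u)) + 1
              rw [show n - 1 - (n - 2 - u) = u + 1 by omega]; exact mv_tgt (by omega))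
          (by show mv D u (u + 1) (n - 1 - (n - 2 - u + 1)) = D (n - 1 - (n - 2 - u + 1)) - 2
              rw [show n - 1 - (n - 2 - u + 1) = u by omega]; exact mv_self)
          (by show 2 ≤ D (n - 1 - (n - 2 - u + 1))
              rw [show n - 1 - (n - 2 - u + 1) = u by omega]; exact h2)]
        exact Hinc i hi
      unfold cutVal; rw [hD'0, hd, hc]
    · -- i = i : crossing
      have hd : chain (decL (mv D i (i + 1)) i) = 0 := by
        have : chain (decL (mv D i (i + 1)) i) ≤ chain (decL D i) := by
          unfold decL
          exact chain_update_mono _ _ (fun d hd => by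
            rcases eq_or_ne (d + 1) i with h | h
            · rw [h, mv_self]; omega
            · rw [mv_ne h (by omega)])
        have := Hdec i (by omega)
        omega
      have hc : chain (incL n (mv D i (i + 1)) i) = 0 := by
        have key : chain (incL n (mv D i (i + 1)) i) ≤
            chain ((List.range ((n - 1 - i) + 1)).map (fun d => D (n - 1 - d))) := by
          unfold incL
          exact chain_cross_helper (fun d => D (n - 1 - d)) _ (by omega)
            (fun d hd => mv_ne (by omega) (by omega))
            (by show mv D i (i + 1) (n - 1 - (n - 1 - i - 1)) = D (n - 1 - (n - 1 - i - 1)) + 1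
                rw [show n - 1 - (n - 1 - i - 1) = i + 1 by omega]; exact mv_tgt (by omega))
            (by show 2 ≤ D (n - 1 - (n - 1 - i))
                rw [show n - 1 - (n - 1 - i) = i by omega]; exact h2)
        have h9 : chain ((List.range ((n - 1 - i) + 1)).map (fun d => D (n - 1 - d))) = 0 := by
          have := Hinc (i - 1) (by omega)
          unfold incL at this
          rw [show n - 1 - (i - 1) = (n - 1 - i) + 1 by omega] at this
          exact this
        omega
      unfold cutVal; rw [hD'0, hd, hc]
    · -- u < i : dec away, inc unchanged
      have hd : chain (decL (mv D u (u + 1)) i) = 0 := by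
        have key : chain (decL (mv D u (u + 1)) i) ≤ chain (decL D i) := by
          unfold decL
          exact chain_update2_away (fun d => D (d + 1)) _ (p := u - 1) (by omega)
            (fun d hd hd1 hd2 => mv_ne (by omega) (by omega))
            (by show mv D u (u + 1) (u - 1 + 1) = D (u - 1 + 1) - 2
                rw [show u - 1 + 1 = u by omega]; exact mv_self)
            (by show mv D u (u + 1) (u - 1 + 1 + 1) = D (u - 1 + 1 + 1) + 1
                rw [show u - 1 + 1 + 1 = u + 1 by omega]; exact mv_tgt (by omega))
            (by show 2 ≤ D (u - 1 + 1)
                rw [show u - 1 + 1 = u by omega]; exact h2)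
        have := Hdec i hi
        omega
      have hc : chain (incL n (mv D u (u + 1)) i) = 0 := by
        unfold incL
        rw [chain_congr (f := fun d => D (n - 1 - d)) (fun d hd => mv_ne (by omega) (by omega))]
        exact Hinc i hi
      unfold cutVal; rw [hD'0, hd, hc]
  · -- u = n - 1, v = 0 : impossible
    exfalso
    have h0 := Hinc 0 (by omega)
    unfold incL at h0
    rw [map_range_split2 (fun d => D (n - 1 - d)) (p := 0) (by omega)] at h0
    simp only [List.range_zero, List.map_nil, List.nil_append, chain] at h0
    rw [show n - 1 - 0 = n - 1 by omega] at h0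
    rw [hu] at h2
    omega
  · -- u = v + 1, decreasing move
    rcases Nat.eq_zero_or_pos v with rfl | hv1
    · -- v = 0: move into 0 is impossible
      exfalso
      have h1 := Hdec 1 (by omega)
      unfold decL at h1
      rw [show (1:ℕ) = 0 + 1 by rfl, List.range_succ] at h1
      simp only [List.range_zero, List.nil_append, List.map_cons, List.map_nil, chain,
        Nat.zero_add] at h1
      simp only [Nat.zero_add] at h2
      omega
    intro i hi
    have hD'0 : mv D (v + 1) v 0 = 0 := by rw [mv_ne (by omega) (by omega)]; exact HD0
    rcases lt_trichotomy i v with hiv | rfl | hiv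
    · -- i < v : dec unchanged, inc away
      have hd : chain (decL (mv D (v + 1) v) i) = 0 := by
        unfold decL
        rw [chain_congr (f := fun d => D (d + 1)) (fun d hd => mv_ne (by omega) (by omega))]
        exact Hdec i hi
      have hc : chain (incL n (mv D (v + 1) v) i) = 0 := by
        have key : chain (incL n (mv D (v + 1) v) i) ≤ chain (incL n D i) := by
          unfold incL
          exact chain_update2_away (fun d => D (n - 1 - d)) _ (p := n - 2 - v) (by omega)
            (fun d hd hd1 hd2 => mv_ne (by omega) (by omega))
            (by show mv D (v + 1) v (n - 1 - (n - 2 - v)) = D (n - 1 - (n - 2 - v)) - 2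
                rw [show n - 1 - (n - 2 - v) = v + 1 by omega]; exact mv_self)
            (by show mv D (v + 1) v (n - 1 - (n - 2 - v + 1)) = D (n - 1 - (n - 2 - v + 1)) + 1
                rw [show n - 1 - (n - 2 - v + 1) = v by omega]; exact mv_tgt (by omega))
            (by show 2 ≤ D (n - 1 - (n - 2 - v))
                rw [show n - 1 - (n - 2 - v) = v + 1 by omega]; exact h2)
        have := Hinc i hi
        omega
      unfold cutVal; rw [hD'0, hd, hc]
    · -- i = i : crossing
      have hd : chain (decL (mv D (i + 1) i) i) = 0 := by
        have key : chain (decL (mv D (i + 1) i) i) ≤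
            chain ((List.range (i + 1)).map (fun d => D (d + 1))) := by
          unfold decL
          exact chain_cross_helper (fun d => D (d + 1)) _ (by omega)
            (fun d hd => mv_ne (by omega) (by omega))
            (by show mv D (i + 1) i (i - 1 + 1) = D (i - 1 + 1) + 1
                rw [show i - 1 + 1 = i by omega]; exact mv_tgt (by omega))
            (by show 2 ≤ D (i + 1); exact h2)
        have h9 : chain ((List.range (i + 1)).map (fun d => D (d + 1))) = 0 := Hdec (i + 1) hvn
        omega
      have hc : chain (incL n (mv D (i + 1) i) i) = 0 := by
        have key : chain (incL n (mv D (i + 1) i) i) ≤ chain (incL n D i) := by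
          unfold incL
          exact chain_update_mono _ _ (fun d hd => by
            rcases eq_or_ne (n - 1 - d) (i + 1) with h | h
            · rw [h, mv_self]; omega
            · rw [mv_ne h (by omega)])
        have := Hinc i (by omega)
        omega
      unfold cutVal; rw [hD'0, hd, hc]
    · -- v < i : dec toward, inc unchanged
      have hd : chain (decL (mv D (v + 1) v) i) = 0 := by
        unfold decL
        rw [chain_update2_toward (fun d => D (d + 1)) _ (p := v - 1) (by omega)
          (fun d hd hd1 hd2 => mv_ne (by omega) (by omega))
          (by show mv D (v + 1) v (v - 1 + 1) = D (v - 1 + 1) + 1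
              rw [show v - 1 + 1 = v by omega]; exact mv_tgt (by omega))
          (by show mv D (v + 1) v (v - 1 + 1 + 1) = D (v - 1 + 1 + 1) - 2
              rw [show v - 1 + 1 + 1 = v + 1 by omega]; exact mv_self)
          (by show 2 ≤ D (v - 1 + 1 + 1)
              rw [show v - 1 + 1 + 1 = v + 1 by omega]; exact h2)]
        exact Hdec i hi
      have hc : chain (incL n (mv D (v + 1) v) i) = 0 := by
        unfold incL
        rw [chain_congr (f := fun d => D (n - 1 - d)) (fun d hd => mv_ne (by omega) (by omega))]
        exact Hinc i hi
      unfold cutVal; rw [hD'0, hd, hc]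
  · exact absurd hu hu0

end Invariant


section Graph

/-- basic step lemma -/
lemma reaches_step [DecidableEq V] {G : SimpleGraph V} {D : V → ℕ} {u v r : V} {m : ℕ}
    (ha : G.Adj u v) (h2 : 2 ≤ D u) (h : Reaches G (applyMove D (u, v)) r m) :
    Reaches G D r m := by
  obtain ⟨l, hval, hge⟩ := h
  exact ⟨(u, v) :: l, ⟨ha, h2, hval⟩, hge⟩

def pourFn [DecidableEq V] (D : V → ℕ) (u v : V) : V → ℕ :=
  fun w => if w = u then D u % 2 else if w = v then D v + D u / 2 else D w

lemma reaches_pour [DecidableEq V] {G : SimpleGraph V} {u v r : V} {m : ℕ}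
    (ha : G.Adj u v) (D : V → ℕ) (h : Reaches G (pourFn D u v) r m) :
    Reaches G D r m := by
  have huv : u ≠ v := G.ne_of_adj ha
  obtain ⟨N, hN⟩ : ∃ N, D u ≤ N := ⟨D u, le_rfl⟩
  induction N generalizing D with
  | zero =>
      have : pourFn D u v = D := by
        funext w
        unfold pourFn
        split_ifs with h1 h2
        · subst h1; omega
        · subst h2; omega
        · rfl
      rwa [this] at h
  | succ N ih =>
      by_cases hsm : D u ≤ 1
      · have : pourFn D u v = D := by
          funext w
          unfold pourFn
          split_ifs with h1 h2
          · subst h1; omega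
          · subst h2; omega
          · rfl
        rwa [this] at h
      · push_neg at hsm
        apply reaches_step ha hsm
        have Eu : applyMove D (u, v) u = D u - 2 := by simp [applyMove]
        have Ev : applyMove D (u, v) v = D v + 1 := by simp [applyMove, Ne.symm huv]
        have Ew : ∀ w, w ≠ u → w ≠ v → applyMove D (u, v) w = D w := by
          intro w hw1 hw2; simp [applyMove, hw1, hw2]
        apply ih (applyMove D (u, v))
        · have key : pourFn (applyMove D (u, v)) u v = pourFn D u v := by
            funext w
            by_cases h1 : w = u
            · subst h1; simp [pourFn, Eu]; omega
            · by_cases hw2 : w = v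
              · subst hw2
                simp [pourFn, if_neg h1, Eu, Ev]
                omega
              · simp only [pourFn, if_neg h1, if_neg hw2, Ew w h1 hw2]
          rwa [key]
        · rw [Eu]; omega

end Graph


section Translate

variable {n : ℕ}

def toNat (Df : Fin n → ℕ) : ℕ → ℕ := fun j => if h : j < n then Df ⟨j, h⟩ else 0

def pourN (E : ℕ → ℕ) (u v : ℕ) : ℕ → ℕ :=
  fun j => if j = u then E u % 2 else if j = v then E j + E u / 2 else E j

lemma toNat_applyMove (Df : Fin n → ℕ) (u v : Fin n) :
    toNat (applyMove Df (u, v)) = mv (toNat Df) u.val v.val := by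
  funext j
  by_cases hj : j < n
  · simp only [toNat, mv, applyMove, dif_pos hj]
    by_cases h1 : j = u.val
    · have e1 : (⟨j, hj⟩ : Fin n) = u := by exact Fin.ext h1
      simp [e1, h1]
    · have e1 : (⟨j, hj⟩ : Fin n) ≠ u := by
        intro hc; exact h1 (by rw [← hc])
      by_cases h2 : j = v.val
      · have e2 : (⟨j, hj⟩ : Fin n) = v := by exact Fin.ext h2
        simp [e1, e2, h1, h2, Fin.val_eq_val]
      · have e2 : (⟨j, hj⟩ : Fin n) ≠ v := by
          intro hc; exact h2 (by rw [← hc])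
        simp [e1, e2, h1, h2]
  · have h1 : j ≠ u.val := by have := u.isLt; omega
    have h2 : j ≠ v.val := by have := v.isLt; omega
    simp [toNat, mv, dif_neg hj, h1, h2]

lemma toNat_pourFn (Df : Fin n → ℕ) (u v : Fin n) :
    toNat (pourFn Df u v) = pourN (toNat Df) u.val v.val := by
  have huval : toNat Df u.val = Df u := by
    simp [toNat, u.isLt]
  funext j
  by_cases hj : j < n
  · simp only [toNat, pourN, pourFn, dif_pos hj]
    by_cases h1 : j = u.val
    · have e1 : (⟨j, hj⟩ : Fin n) = u := by exact Fin.ext h1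
      simp [e1, h1, toNat, u.isLt]
    · have e1 : (⟨j, hj⟩ : Fin n) ≠ u := by
        intro hc; exact h1 (by rw [← hc])
      by_cases h2 : j = v.val
      · have e2 : (⟨j, hj⟩ : Fin n) = v := by exact Fin.ext h2
        simp [e1, e2, h1, h2, toNat, u.isLt, Fin.val_eq_val]
      · have e2 : (⟨j, hj⟩ : Fin n) ≠ v := by
          intro hc; exact h2 (by rw [← hc])
        simp [e1, e2, h1, h2]
  · have h1 : j ≠ u.val := by have := u.isLt; omega
    have h2 : j ≠ v.val := by have := v.isLt; omega
    simp [toNat, pourN, dif_neg hj, h1, h2]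

lemma adj_succ (hn : 3 ≤ n) {j : ℕ} (hj : j + 1 < n) :
    (cycleGraph n).Adj ⟨j + 1, hj⟩ ⟨j, by omega⟩ := by
  rw [SimpleGraph.cycleGraph_adj']
  left
  rw [Fin.sub_def]
  simp only
  have e : n - j + (j + 1) = n + 1 := by omega
  rw [e, Nat.add_mod_left, Nat.mod_eq_of_lt (by omega)]

lemma adj_wrap (hn : 3 ≤ n) :
    (cycleGraph n).Adj ⟨n - 1, by omega⟩ ⟨0, by omega⟩ := by
  rw [SimpleGraph.cycleGraph_adj']
  right
  rw [Fin.sub_def]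
  simp only
  have e : n - (n - 1) + 0 = 1 := by omega
  rw [e, Nat.mod_eq_of_lt (by omega)]

lemma adj_cases (hn : 3 ≤ n) {u v : Fin n} (h : (cycleGraph n).Adj u v) :
    (u.val + 1 < n ∧ v.val = u.val + 1) ∨ (u.val = n - 1 ∧ v.val = 0) ∨
      (v.val + 1 < n ∧ u.val = v.val + 1) ∨ (v.val = n - 1 ∧ u.val = 0) := by
  have hu := u.isLt
  have hv := v.isLt
  have hne : u.val ≠ v.val := by
    intro hc
    exact (cycleGraph n).ne_of_adj h (Fin.ext hc)
  rw [SimpleGraph.cycleGraph_adj'] at h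
  rcases h with h | h
  · -- u - v = 1 : u = v + 1 cyclically
    rw [Fin.sub_def] at h
    simp only at h
    rcases Nat.lt_or_ge (n - v.val + u.val) n with hlt | hge
    · rw [Nat.mod_eq_of_lt hlt] at h
      right; right; right
      omega
    · rw [Nat.mod_eq_sub_mod hge, Nat.mod_eq_of_lt (by omega)] at h
      right; right; left
      omega
  · rw [Fin.sub_def] at h
    simp only at h
    rcases Nat.lt_or_ge (n - u.val + v.val) n with hlt | hge
    · rw [Nat.mod_eq_of_lt hlt] at h
      right; left
      omega
    · rw [Nat.mod_eq_sub_mod hge, Nat.mod_eq_of_lt (by omega)] at h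
      left
      omega

end Translate


section Soundness

variable {n : ℕ}

lemma pour_dec_step (E : ℕ → ℕ) (i : ℕ) :
    E 0 + chain (decL E (i + 1)) = (pourN E (i + 1) i) 0 + chain (decL (pourN E (i + 1) i) i) := by
  rcases Nat.eq_zero_or_pos i with rfl | hi
  · have e0 : pourN E 1 0 0 = E 0 + E 1 / 2 := by
      unfold pourN; rw [if_neg (by omega), if_pos rfl]
    have e1 : decL E 1 = [E 1] := by
      unfold decL
      rw [show (1:ℕ) = 0 + 1 by rfl, List.range_succ]
      simp
    have e2 : decL (pourN E 1 0) 0 = [] := by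
      unfold decL; simp
    rw [e0, e1, e2]
    show E 0 + (E 1 + chain []) / 2 = E 0 + E 1 / 2 + chain []
    show E 0 + (E 1 + 0) / 2 = E 0 + E 1 / 2 + 0
    omega
  · have e0 : pourN E (i + 1) i 0 = E 0 := by
      unfold pourN; rw [if_neg (by omega), if_neg (by omega)]
    have e1 : decL (pourN E (i + 1) i) i = decL E (i - 1) ++ [E i + E (i + 1) / 2] := by
      conv_lhs => rw [show i = (i - 1) + 1 by omega]
      rw [decL_succ]
      congr 1
      · unfold decL
        exact map_range_congr (fun d hd => by
          unfold pourN; rw [if_neg (by omega), if_neg (by omega)])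
      · rw [show i - 1 + 1 = i by omega]
        unfold pourN; rw [if_neg (by omega), if_pos rfl]
    have e2 : decL E (i + 1) = decL E (i - 1) ++ [E i, E (i + 1)] := by
      rw [decL_succ]
      conv_lhs => rw [show i = (i - 1) + 1 by omega]
      rw [decL_succ, show i - 1 + 1 = i by omega]
      simp
    rw [e0, e1, e2, chain_pour]

lemma pour_inc_step0 (hn : 3 ≤ n) (E : ℕ → ℕ) :
    E 0 + chain (incL n E (n - 2)) =
      (pourN E (n - 1) 0) 0 + chain (incL n (pourN E (n - 1) 0) (n - 1)) := by
  have e0 : pourN E (n - 1) 0 0 = E 0 + E (n - 1) / 2 := by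
    unfold pourN; rw [if_neg (by omega), if_pos rfl]
  have e1 : incL n E (n - 2) = [E (n - 1)] := by
    unfold incL
    rw [show n - 1 - (n - 2) = 0 + 1 by omega, List.range_succ]
    simp
  have e2 : incL n (pourN E (n - 1) 0) (n - 1) = [] := by
    unfold incL; simp
  rw [e0, e1, e2]
  show E 0 + (E (n - 1) + 0) / 2 = E 0 + E (n - 1) / 2 + 0
  omega

lemma pour_inc_step (hn : 3 ≤ n) (E : ℕ → ℕ) {m : ℕ} (hm : 1 ≤ m) (hm2 : m ≤ n - 2) :
    E 0 + chain (incL n E (n - 2 - m)) =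
      (pourN E (n - 1 - m) (n - m)) 0 +
        chain (incL n (pourN E (n - 1 - m) (n - m)) (n - 1 - m)) := by
  have e0 : pourN E (n - 1 - m) (n - m) 0 = E 0 := by
    unfold pourN; rw [if_neg (by omega), if_neg (by omega)]
  have e1 : incL n (pourN E (n - 1 - m) (n - m)) (n - 1 - m) =
      incL n E (n - m) ++ [E (n - m) + E (n - 1 - m) / 2] := by
    rw [show n - 1 - m = (n - m) - 1 by omega]
    rw [incL_last _ (by omega), show n - m - 1 + 1 = n - m by omega]
    congr 1
    · unfold incL
      exact map_range_congr (fun d hd => by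
        unfold pourN; rw [if_neg (by omega), if_neg (by omega)])
    · unfold pourN; rw [if_neg (by omega), if_pos rfl]
  have e2 : incL n E (n - 2 - m) = incL n E (n - m) ++ [E (n - m), E (n - 1 - m)] := by
    rw [incL_last _ (by omega : (n - 2 - m) + 2 ≤ n), show n - 2 - m + 1 = n - 1 - m by omega]
    rw [show n - 1 - m = (n - m) - 1 by omega]
    rw [incL_last _ (by omega), show n - m - 1 + 1 = n - m by omega]
    simp [show (n - m) - 1 = n - 1 - m by omega]
  rw [e0, e1, e2, chain_pour]

lemma sound_dec (hn : 3 ≤ n) :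
    ∀ i, i < n → ∀ Df : Fin n → ℕ,
      1 ≤ toNat Df 0 + chain (decL (toNat Df) i) →
        Reaches (cycleGraph n) Df ⟨0, by omega⟩ 1 := by
  intro i
  induction i with
  | zero =>
      intro _ Df h
      refine ⟨[], trivial, ?_⟩
      have h0 : toNat Df 0 = Df ⟨0, by omega⟩ := dif_pos (by omega)
      have h1 : decL (toNat Df) 0 = [] := by unfold decL; simp
      rw [h0, h1] at h
      show 1 ≤ Df ⟨0, by omega⟩
      have : chain ([] : List ℕ) = 0 := rfl
      omega
  | succ i ih =>
      intro hi Df h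
      have ha : (cycleGraph n).Adj ⟨i + 1, hi⟩ ⟨i, by omega⟩ := adj_succ hn hi
      apply reaches_pour ha Df
      apply ih (by omega)
      rw [toNat_pourFn]
      show 1 ≤ pourN (toNat Df) (i + 1) i 0 + chain (decL (pourN (toNat Df) (i + 1) i) i)
      rw [← pour_dec_step]
      exact h

lemma sound_inc (hn : 3 ≤ n) :
    ∀ m, m ≤ n - 1 → ∀ Df : Fin n → ℕ,
      1 ≤ toNat Df 0 + chain (incL n (toNat Df) (n - 1 - m)) →
        Reaches (cycleGraph n) Df ⟨0, by omega⟩ 1 := by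
  intro m
  induction m with
  | zero =>
      intro _ Df h
      refine ⟨[], trivial, ?_⟩
      have h0 : toNat Df 0 = Df ⟨0, by omega⟩ := dif_pos (by omega)
      have h1 : incL n (toNat Df) (n - 1 - 0) = [] := by
        unfold incL; simp
      rw [h0, h1] at h
      show 1 ≤ Df ⟨0, by omega⟩
      have : chain ([] : List ℕ) = 0 := rfl
      omega
  | succ m ih =>
      intro hm Df h
      rcases Nat.eq_zero_or_pos m with rfl | hm1
      · -- pour from n-1 into 0
        have ha : (cycleGraph n).Adj ⟨n - 1, by omega⟩ ⟨0, by omega⟩ := adj_wrap hn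
        apply reaches_pour ha Df
        apply ih (by omega)
        rw [toNat_pourFn]
        show 1 ≤ pourN (toNat Df) (n - 1) 0 0 +
          chain (incL n (pourN (toNat Df) (n - 1) 0) (n - 1 - 0))
        rw [show n - 1 - 0 = n - 1 by omega, ← pour_inc_step0 hn]
        rw [show n - 2 = n - 1 - (0 + 1) by omega]
        exact h
      · -- pour from n-1-m into n-m
        have hj : (n - 1 - m) + 1 < n := by omega
        have ha : (cycleGraph n).Adj ⟨(n - 1 - m) + 1, hj⟩ ⟨n - 1 - m, by omega⟩ :=
          adj_succ hn hj
        have ha' : (cycleGraph n).Adj ⟨n - 1 - m, by omega⟩ ⟨n - m, by omega⟩ := by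
          have e : (⟨(n - 1 - m) + 1, hj⟩ : Fin n) = ⟨n - m, by omega⟩ := by
            apply Fin.ext; show (n - 1 - m) + 1 = n - m; omega
          rw [e] at ha
          exact ha.symm
        apply reaches_pour ha' Df
        apply ih (by omega)
        rw [toNat_pourFn]
        show 1 ≤ pourN (toNat Df) (n - 1 - m) (n - m) 0 +
          chain (incL n (pourN (toNat Df) (n - 1 - m) (n - m)) (n - 1 - m))
        rw [← pour_inc_step hn _ hm1 (by omega)]
        rw [show n - 2 - m = n - 1 - (m + 1) by omega]
        exact h

lemma soundness (hn : 3 ≤ n) (Df : Fin n → ℕ) {i : ℕ} (hi : i < n)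
    (h : 1 ≤ cutVal n (toNat Df) i) : Reaches (cycleGraph n) Df ⟨0, by omega⟩ 1 := by
  unfold cutVal at h
  rcases Nat.lt_or_ge 0 (toNat Df 0 + chain (decL (toNat Df) i)) with h1 | h1
  · exact sound_dec hn i hi Df h1
  · have h2 : 1 ≤ toNat Df 0 + chain (incL n (toNat Df) i) := by omega
    have := sound_inc hn (n - 1 - i) (by omega) Df
    rw [show n - 1 - (n - 1 - i) = i by omega] at this
    exact this h2

end Soundness


section Completeness

variable {n : ℕ}

lemma complete_zero (hn : 3 ≤ n) {Df : Fin n → ℕ} {l : List (Fin n × Fin n)}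
    (hv : ValidSeq (cycleGraph n) Df l)
    (H : ∀ i < n, cutVal n (toNat Df) i = 0) :
    ∀ i < n, cutVal n (toNat (applySeq Df l)) i = 0 := by
  induction l generalizing Df with
  | nil => exact H
  | cons p l ih =>
      obtain ⟨ha, h2, hv'⟩ := hv
      show ∀ i < n, cutVal n (toNat (applySeq (applyMove Df p) l)) i = 0
      apply ih hv'
      have hmv : toNat (applyMove Df p) = mv (toNat Df) p.1.val p.2.val :=
        toNat_applyMove Df p.1 p.2
      rw [hmv]
      apply invariant hn H
      · show 2 ≤ toNat Df p.1.val
        have : toNat Df p.1.val = Df p.1 := by simp [toNat, p.1.isLt]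
        omega
      · exact adj_cases hn ha

lemma not_reaches (hn : 3 ≤ n) {Df : Fin n → ℕ}
    (H : ∀ i < n, cutVal n (toNat Df) i = 0) :
    ¬Reaches (cycleGraph n) Df ⟨0, by omega⟩ 1 := by
  rintro ⟨l, hv, hge⟩
  have h1 := complete_zero hn hv H 0 (by omega)
  unfold cutVal at h1
  have h0 : 1 ≤ toNat (applySeq Df l) 0 := by
    unfold toNat
    rw [dif_pos (show (0:ℕ) < n by omega)]
    exact hge
  omega

lemma reaches_map {G : SimpleGraph (Fin n)} (e : G ≃g G) (D : Fin n → ℕ) (r : Fin n) (m : ℕ)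
    (h : Reaches G (fun x => D (e x)) r m) : Reaches G D (e r) m := by
  classical
  obtain ⟨l, hv, hg⟩ := h
  have key : ∀ (D : Fin n → ℕ) (a b : Fin n),
      (fun x => applyMove D (e a, e b) (e x)) = applyMove (fun x => D (e x)) (a, b) := by
    intro D a b
    funext w
    simp [applyMove, EmbeddingLike.apply_eq_iff_eq]
  have vs : ∀ (l : List (Fin n × Fin n)) (D : Fin n → ℕ),
      ValidSeq G (fun x => D (e x)) l →
        ValidSeq G D (l.map (fun p => (e p.1, e p.2))) := by
    intro l
    induction l with
    | nil => intro D _; trivial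
    | cons p l ih =>
        intro D hv
        obtain ⟨ha, h2, hv'⟩ := hv
        refine ⟨e.map_rel_iff.2 ha, h2, ?_⟩
        apply ih
        rw [key]
        exact hv'
  have as : ∀ (l : List (Fin n × Fin n)) (D : Fin n → ℕ),
      applySeq D (l.map (fun p => (e p.1, e p.2))) (e r) =
        applySeq (fun x => D (e x)) l r := by
    intro l
    induction l with
    | nil => intro D; rfl
    | cons p l ih =>
        intro D
        show applySeq (applyMove D (e p.1, e p.2)) (l.map _) (e r) = _
        rw [ih, key]
        rfl
  exact ⟨l.map (fun p => (e p.1, e p.2)), vs l D hv, by rw [as l D]; exact hg⟩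

def rotIso (hn : 3 ≤ n) (t : Fin n) : cycleGraph n ≃g cycleGraph n := by
  haveI : NeZero n := ⟨by omega⟩
  refine ⟨Equiv.addRight t, ?_⟩
  intro a b
  simp only [Equiv.coe_addRight, SimpleGraph.cycleGraph_adj']
  rw [add_sub_add_right_eq_sub, add_sub_add_right_eq_sub]

end Completeness


section Core

lemma wsum_map_range (f : ℕ → ℕ) (m : ℕ) :
    wsum ((List.range m).map f) = ∑ d ∈ Finset.range m, f d * 2 ^ (m - 1 - d) := by
  induction m with
  | zero => simp [wsum]
  | succ m ih =>
      rw [List.range_succ, List.map_append]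
      simp only [List.map_cons, List.map_nil]
      rw [wsum_append_singleton, ih, Finset.sum_range_succ]
      rw [Finset.mul_sum]
      have e1 : ∀ d ∈ Finset.range m, 2 * (f d * 2 ^ (m - 1 - d)) = f d * 2 ^ (m + 1 - 1 - d) := by
        intro d hd
        rw [Finset.mem_range] at hd
        rw [show m + 1 - 1 - d = (m - 1 - d) + 1 by omega, pow_succ]
        ring
      rw [Finset.sum_congr rfl e1]
      have e2 : f m * 2 ^ (m + 1 - 1 - m) = f m := by
        rw [show m + 1 - 1 - m = 0 by omega, pow_zero, mul_one]
      omega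

lemma chain_zero_wsum (l : List ℕ) (h : chain l = 0) : wsum l + 1 ≤ 2 ^ l.length := by
  have := wsum_bound l
  rw [h] at this
  simpa using this

lemma pow_two_mod_three (m : ℕ) : 2 ^ m % 3 = 1 ∨ 2 ^ m % 3 = 2 := by
  induction m with
  | zero => left; rfl
  | succ m ih => rw [pow_succ]; omega

lemma aux3 (s : ℕ) : 3 * 2 ^ s ≤ 1 + 2 ^ (2 * s + 1) := by
  have e : 2 ^ (2 * s + 1) = 2 ^ s * 2 ^ s * 2 := by
    rw [show 2 * s + 1 = s + s + 1 by omega, pow_add, pow_add, pow_one]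
  rw [e]
  have hx : 1 ≤ 2 ^ s := Nat.one_le_two_pow
  rcases Nat.lt_or_ge (2 ^ s) 2 with h | h
  · interval_cases h : (2 ^ s) <;> omega
  · have h1 : 2 * 2 ^ s ≤ 2 ^ s * 2 ^ s := by
      rw [mul_comm 2 (2 ^ s)]
      exact Nat.mul_le_mul_left _ h
    omega

lemma aux4 (s : ℕ) (hs : 1 ≤ s) : 9 * 2 ^ (s - 1) ≤ 1 + 2 ^ (2 * s + 1) := by
  obtain ⟨s', rfl⟩ : ∃ s', s = s' + 1 := ⟨s - 1, by omega⟩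
  have e : 2 ^ (2 * (s' + 1) + 1) = 2 ^ s' * 2 ^ s' * 8 := by
    rw [show 2 * (s' + 1) + 1 = s' + s' + 3 by omega, pow_add, pow_add]
    norm_num
  rw [e]
  simp only [Nat.add_sub_cancel]
  have hx : 1 ≤ 2 ^ s' := Nat.one_le_two_pow
  rcases Nat.lt_or_ge (2 ^ s') 2 with h | h
  · interval_cases h : (2 ^ s') <;> omega
  · have h1 : 2 * 2 ^ s' ≤ 2 ^ s' * 2 ^ s' := by
      rw [mul_comm 2 (2 ^ s')]
      exact Nat.mul_le_mul_left _ h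
    omega

lemma coeff_half {k a b : ℕ} (hk : 1 ≤ k) (hab : a ≤ b) (h : a + b = 2 * k - 1) :
    3 * 2 ^ (k - 1) ≤ 2 ^ a + 2 ^ b := by
  have ha : a ≤ k - 1 := by omega
  have hb : b - a = 2 * (k - 1 - a) + 1 := by omega
  have e1 : 2 ^ (k - 1) = 2 ^ a * 2 ^ (k - 1 - a) := by
    rw [← pow_add]; congr 1; omega
  have e2 : 2 ^ b = 2 ^ a * 2 ^ (b - a) := by
    rw [← pow_add]; congr 1; omega
  rw [e1, e2, hb]
  have := aux3 (k - 1 - a)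
  calc 3 * (2 ^ a * 2 ^ (k - 1 - a)) = 2 ^ a * (3 * 2 ^ (k - 1 - a)) := by ring
  _ ≤ 2 ^ a * (1 + 2 ^ (2 * (k - 1 - a) + 1)) := Nat.mul_le_mul_left _ this
  _ = 2 ^ a + 2 ^ a * 2 ^ (2 * (k - 1 - a) + 1) := by ring
  _ ≤ 2 ^ a + 2 ^ a * 2 ^ (2 * (k - 1 - a) + 1) := le_rfl

lemma coeff_ge {k a b : ℕ} (hk : 1 ≤ k) (h : a + b = 2 * k - 1) :
    3 * 2 ^ (k - 1) ≤ 2 ^ a + 2 ^ b := by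
  rcases le_total a b with hab | hab
  · exact coeff_half hk hab h
  · have := coeff_half hk hab (by omega)
    omega

lemma coeff_half' {k a b : ℕ} (hk : 2 ≤ k) (hab : a ≤ b) (h : a + b = 2 * k - 1)
    (ha : a ≠ k - 1) : 9 * 2 ^ (k - 2) ≤ 2 ^ a + 2 ^ b := by
  have ha2 : a ≤ k - 2 := by omega
  have hs : 1 ≤ k - 1 - a := by omega
  have e1 : 2 ^ (k - 2) = 2 ^ a * 2 ^ (k - 1 - a - 1) := by
    rw [← pow_add]; congr 1; omega
  have e2 : 2 ^ b = 2 ^ a * 2 ^ (2 * (k - 1 - a) + 1) := by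
    rw [← pow_add]; congr 1; omega
  rw [e1, e2]
  have := aux4 (k - 1 - a) hs
  calc 9 * (2 ^ a * 2 ^ (k - 1 - a - 1)) = 2 ^ a * (9 * 2 ^ (k - 1 - a - 1)) := by ring
  _ ≤ 2 ^ a * (1 + 2 ^ (2 * (k - 1 - a) + 1)) := Nat.mul_le_mul_left _ this
  _ = 2 ^ a + 2 ^ a * 2 ^ (2 * (k - 1 - a) + 1) := by ring

lemma coeff_ge' {k a b : ℕ} (hk : 2 ≤ k) (h : a + b = 2 * k - 1)
    (ha1 : a ≠ k - 1) (ha2 : a ≠ k) : 9 * 2 ^ (k - 2) ≤ 2 ^ a + 2 ^ b := by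
  rcases le_total a b with hab | hab
  · exact coeff_half' hk hab h ha1
  · have := coeff_half' hk hab (by omega) (by omega)
    omega

lemma finish3 {k S : ℕ} (hk : 1 ≤ k) (hX : 3 * S ≤ 2 ^ (k + 2) - 2) :
    S ≤ 2 * (2 ^ (k + 1) / 3) := by
  have h2 : 2 ^ (k + 2) = 2 * 2 ^ (k + 1) := by rw [pow_succ]; ring
  have h3 := pow_two_mod_three (k + 1)
  have h4 : 2 ≤ 2 ^ (k + 1) := by
    calc 2 = 2 ^ 1 := rfl
    _ ≤ 2 ^ (k + 1) := Nat.pow_le_pow_right (by norm_num) (by omega)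
  omega

end Core


section CoreMain

lemma core {k : ℕ} (hk : 1 ≤ k) {E : ℕ → ℕ}
    (H : ∀ i < 2 * k + 1, cutVal (2 * k + 1) E i = 0) :
    ∑ j ∈ Finset.range (2 * k + 1), E j ≤ 2 * (2 ^ (k + 1) / 3) := by
  have Hdec : ∀ i, i < 2 * k + 1 → chain (decL E i) = 0 := by
    intro i hi; have := H i hi; unfold cutVal at this; omega
  have Hinc : ∀ i, i < 2 * k + 1 → chain (incL (2 * k + 1) E i) = 0 := by
    intro i hi; have := H i hi; unfold cutVal at this; omega
  have HD0 : E 0 = 0 := by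
    have := H 0 (by omega); unfold cutVal at this; omega
  -- full decreasing cut
  have A1 : ∑ d ∈ Finset.range (2 * k), E (d + 1) * 2 ^ (2 * k - 1 - d) ≤ 2 ^ (2 * k) - 1 := by
    have h1 := chain_zero_wsum _ (Hdec (2 * k) (by omega))
    unfold decL at h1
    rw [wsum_map_range] at h1
    simp only [List.length_map, List.length_range] at h1
    omega
  -- full increasing cut
  have A2 : ∑ d ∈ Finset.range (2 * k), E (2 * k - d) * 2 ^ (2 * k - 1 - d) ≤ 2 ^ (2 * k) - 1 := by
    have e : incL (2 * k + 1) E 0 = (List.range (2 * k)).map (fun d => E (2 * k - d)) := by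
      unfold incL
      rw [show 2 * k + 1 - 1 - 0 = 2 * k by omega]
      exact map_range_congr (fun d hd => by rw [show 2 * k + 1 - 1 - d = 2 * k - d by omega])
    have h0 := Hinc 0 (by omega)
    rw [e] at h0
    have h1 := chain_zero_wsum _ h0
    rw [wsum_map_range] at h1
    simp only [List.length_map, List.length_range] at h1
    omega
  have A2' : ∑ d ∈ Finset.range (2 * k), E (d + 1) * 2 ^ d ≤ 2 ^ (2 * k) - 1 := by
    have hrefl := Finset.sum_range_reflect (fun d => E (d + 1) * 2 ^ d) (2 * k)
    rw [← hrefl]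
    have e2 : ∀ j ∈ Finset.range (2 * k),
        E ((2 * k - 1 - j) + 1) * 2 ^ (2 * k - 1 - j) = E (2 * k - j) * 2 ^ (2 * k - 1 - j) := by
      intro j hj
      rw [Finset.mem_range] at hj
      rw [show 2 * k - 1 - j + 1 = 2 * k - j by omega]
    rw [Finset.sum_congr rfl e2]
    exact A2
  have AC : ∑ d ∈ Finset.range (2 * k), E (d + 1) * (2 ^ (2 * k - 1 - d) + 2 ^ d)
      ≤ 2 ^ (2 * k + 1) - 2 := by
    have e : ∀ d ∈ Finset.range (2 * k),
        E (d + 1) * (2 ^ (2 * k - 1 - d) + 2 ^ d)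
          = E (d + 1) * 2 ^ (2 * k - 1 - d) + E (d + 1) * 2 ^ d := by
      intro d _; ring
    rw [Finset.sum_congr rfl e, Finset.sum_add_distrib]
    have hp : 2 ^ (2 * k + 1) = 2 * 2 ^ (2 * k) := by rw [pow_succ]; ring
    have hp1 : 1 ≤ 2 ^ (2 * k) := Nat.one_le_two_pow
    omega
  have hsum : ∑ j ∈ Finset.range (2 * k + 1), E j
      = ∑ d ∈ Finset.range (2 * k), E (d + 1) := by
    rw [Finset.sum_range_succ']
    omega
  rw [hsum]
  set S := ∑ d ∈ Finset.range (2 * k), E (d + 1) with hS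
  suffices h3S : 3 * S ≤ 2 ^ (k + 2) - 2 by exact finish3 hk h3S
  by_cases hA : ∃ d, d < 2 * k ∧ d ≠ k - 1 ∧ d ≠ k ∧ 1 ≤ E (d + 1)
  · -- some pebbles away from the two antipodal vertices
    obtain ⟨d0, hd0, hne1, hne2, hE1⟩ := hA
    have hk2 : 2 ≤ k := by omega
    have perterm : ∀ d ∈ Finset.range (2 * k),
        3 * 2 ^ (k - 1) * E (d + 1) ≤ E (d + 1) * (2 ^ (2 * k - 1 - d) + 2 ^ d) := by
      intro d hd
      rw [Finset.mem_range] at hd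
      have hc := coeff_ge (a := 2 * k - 1 - d) (b := d) hk (by omega)
      calc 3 * 2 ^ (k - 1) * E (d + 1) = E (d + 1) * (3 * 2 ^ (k - 1)) := by ring
      _ ≤ E (d + 1) * (2 ^ (2 * k - 1 - d) + 2 ^ d) := Nat.mul_le_mul_left _ hc
    have outlier : 3 * 2 ^ (k - 1) * E (d0 + 1) + 3 * 2 ^ (k - 2)
        ≤ E (d0 + 1) * (2 ^ (2 * k - 1 - d0) + 2 ^ d0) := by
      have h9 : 9 * 2 ^ (k - 2) ≤ 2 ^ (2 * k - 1 - d0) + 2 ^ d0 :=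
        coeff_ge' hk2 (by omega) (by omega) (by omega)
      have e6 : (3:ℕ) * 2 ^ (k - 1) = 6 * 2 ^ (k - 2) := by
        rw [show k - 1 = (k - 2) + 1 by omega, pow_succ]; ring
      have hone : 1 * (3 * 2 ^ (k - 2)) ≤ E (d0 + 1) * (3 * 2 ^ (k - 2)) :=
        Nat.mul_le_mul_right _ hE1
      calc 3 * 2 ^ (k - 1) * E (d0 + 1) + 3 * 2 ^ (k - 2)
          = E (d0 + 1) * (6 * 2 ^ (k - 2)) + 1 * (3 * 2 ^ (k - 2)) := by rw [e6]; ring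
      _ ≤ E (d0 + 1) * (6 * 2 ^ (k - 2)) + E (d0 + 1) * (3 * 2 ^ (k - 2)) := by omega
      _ = E (d0 + 1) * (9 * 2 ^ (k - 2)) := by ring
      _ ≤ E (d0 + 1) * (2 ^ (2 * k - 1 - d0) + 2 ^ d0) := Nat.mul_le_mul_left _ h9
    have hmem : d0 ∈ Finset.range (2 * k) := Finset.mem_range.2 hd0
    have key : 3 * 2 ^ (k - 1) * S + 3 * 2 ^ (k - 2) ≤ 2 ^ (2 * k + 1) - 2 := by
      have eL : 3 * 2 ^ (k - 1) * S = ∑ d ∈ Finset.range (2 * k), 3 * 2 ^ (k - 1) * E (d + 1) := by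
        rw [hS, Finset.mul_sum]
      have eLsplit := Finset.sum_erase_add (Finset.range (2 * k))
        (fun d => 3 * 2 ^ (k - 1) * E (d + 1)) hmem
      have eRsplit := Finset.sum_erase_add (Finset.range (2 * k))
        (fun d => E (d + 1) * (2 ^ (2 * k - 1 - d) + 2 ^ d)) hmem
      have herase : ∑ d ∈ (Finset.range (2 * k)).erase d0, 3 * 2 ^ (k - 1) * E (d + 1)
          ≤ ∑ d ∈ (Finset.range (2 * k)).erase d0,
              E (d + 1) * (2 ^ (2 * k - 1 - d) + 2 ^ d) :=
        Finset.sum_le_sum (fun d hd => perterm d (Finset.mem_of_mem_erase hd))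
      beta_reduce at eLsplit eRsplit
      have := AC
      omega
    -- conclude 3S ≤ 2^(k+2) - 2
    by_contra hc
    push_neg at hc
    have hc' : 2 ^ (k + 2) - 1 ≤ 3 * S := by
      have h4 : 2 ≤ 2 ^ (k + 2) := by
        calc (2:ℕ) = 2 ^ 1 := rfl
        _ ≤ 2 ^ (k + 2) := Nat.pow_le_pow_right (by norm_num) (by omega)
      omega
    have hA1 : 1 ≤ 2 ^ (k - 2) := Nat.one_le_two_pow
    have e1 : 2 ^ (k - 1) = 2 * 2 ^ (k - 2) := by
      rw [show k - 1 = (k - 2) + 1 by omega, pow_succ]; ring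
    have e2 : 2 ^ (k + 2) = 16 * 2 ^ (k - 2) := by
      rw [show k + 2 = (k - 2) + 4 by omega, pow_add]; ring
    have e3 : 2 ^ (2 * k + 1) = 32 * (2 ^ (k - 2) * 2 ^ (k - 2)) := by
      rw [show 2 * k + 1 = (k - 2) + ((k - 2) + 5) by omega, pow_add, pow_add]; ring
    have hmul : (16 * 2 ^ (k - 2) - 1) * (2 * 2 ^ (k - 2)) ≤ (3 * S) * (2 * 2 ^ (k - 2)) :=
      Nat.mul_le_mul_right _ (by omega)
    rw [Nat.sub_mul] at hmul
    have p1 : 16 * 2 ^ (k - 2) * (2 * 2 ^ (k - 2)) = 32 * (2 ^ (k - 2) * 2 ^ (k - 2)) := by ring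
    have p2 : (3 * S) * (2 * 2 ^ (k - 2)) = 6 * (S * 2 ^ (k - 2)) := by ring
    rw [p1, p2] at hmul
    have key2 : 6 * (S * 2 ^ (k - 2)) + 3 * 2 ^ (k - 2)
        ≤ 32 * (2 ^ (k - 2) * 2 ^ (k - 2)) - 2 := by
      have q1 : 3 * 2 ^ (k - 1) * S = 6 * (S * 2 ^ (k - 2)) := by rw [e1]; ring
      rw [q1, e3] at key
      exact key
    omega
  · -- all pebbles on the two antipodal vertices
    push_neg at hA
    simp only [Nat.lt_one_iff] at hA
    have hSab : S = E k + E (k + 1) := by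
      rw [hS]
      have hsub : ({k - 1, k} : Finset ℕ) ⊆ Finset.range (2 * k) := by
        intro x hx
        simp only [Finset.mem_insert, Finset.mem_singleton] at hx
        rw [Finset.mem_range]
        omega
      rw [← Finset.sum_subset hsub (fun x hx hnx => by
        simp only [Finset.mem_insert, Finset.mem_singleton, not_or] at hnx
        exact hA x (Finset.mem_range.1 hx) hnx.1 hnx.2)]
      rw [Finset.sum_pair (by omega : k - 1 ≠ k)]
      rw [show k - 1 + 1 = k by omega]
    have B1 : 2 * E k + E (k + 1) ≤ 2 ^ (k + 1) - 1 := by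
      have h1 := chain_zero_wsum _ (Hdec (k + 1) (by omega))
      unfold decL at h1
      rw [wsum_map_range] at h1
      simp only [List.length_map, List.length_range] at h1
      have hsub : ({k - 1, k} : Finset ℕ) ⊆ Finset.range (k + 1) := by
        intro x hx
        simp only [Finset.mem_insert, Finset.mem_singleton] at hx
        rw [Finset.mem_range]
        omega
      rw [← Finset.sum_subset hsub (fun x hx hnx => by
        simp only [Finset.mem_insert, Finset.mem_singleton, not_or] at hnx
        rw [hA x (by rw [Finset.mem_range] at hx; omega) hnx.1 hnx.2, zero_mul])] at h1
      rw [Finset.sum_pair (by omega : k - 1 ≠ k)] at h1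
      rw [show k - 1 + 1 = k by omega, show k + 1 - 1 - (k - 1) = 1 by omega,
        show k + 1 - 1 - k = 0 by omega, pow_one, pow_zero, mul_one] at h1
      omega
    have B2 : 2 * E (k + 1) + E k ≤ 2 ^ (k + 1) - 1 := by
      have e : incL (2 * k + 1) E (k - 1) = (List.range (k + 1)).map (fun d => E (2 * k - d)) := by
        unfold incL
        rw [show 2 * k + 1 - 1 - (k - 1) = k + 1 by omega]
        exact map_range_congr (fun d hd => by rw [show 2 * k + 1 - 1 - d = 2 * k - d by omega])
      have h0 := Hinc (k - 1) (by omega)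
      rw [e] at h0
      have h1 := chain_zero_wsum _ h0
      rw [wsum_map_range] at h1
      simp only [List.length_map, List.length_range] at h1
      have hsub : ({k - 1, k} : Finset ℕ) ⊆ Finset.range (k + 1) := by
        intro x hx
        simp only [Finset.mem_insert, Finset.mem_singleton] at hx
        rw [Finset.mem_range]
        omega
      rw [← Finset.sum_subset hsub (fun x hx hnx => by
        simp only [Finset.mem_insert, Finset.mem_singleton, not_or] at hnx
        rw [Finset.mem_range] at hx
        have : E (2 * k - x) = 0 := by
          have := hA (2 * k - x - 1) (by omega) (by omega) (by omega)
          rw [show 2 * k - x - 1 + 1 = 2 * k - x by omega] at this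
          exact this
        rw [this, zero_mul])] at h1
      rw [Finset.sum_pair (by omega : k - 1 ≠ k)] at h1
      rw [show 2 * k - (k - 1) = k + 1 by omega, show 2 * k - k = k by omega,
        show k + 1 - 1 - (k - 1) = 1 by omega, show k + 1 - 1 - k = 0 by omega,
        pow_one, pow_zero, mul_one] at h1
      omega
    have hp : 2 ^ (k + 2) = 2 * 2 ^ (k + 1) := by rw [pow_succ]; ring
    have hp1 : 1 ≤ 2 ^ (k + 1) := Nat.one_le_two_pow
    omega

end CoreMain


section Example

lemma map_range_zero {f : ℕ → ℕ} {m : ℕ} (h : ∀ d < m, f d = 0) :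
    (List.range m).map f = List.replicate m 0 := by
  have h2 := List.eq_replicate_of_mem (l := (List.range m).map f) (a := 0) (by
    intro x hx
    rw [List.mem_map] at hx
    obtain ⟨d, hd, rfl⟩ := hx
    exact h d (List.mem_range.1 hd))
  simpa using h2

lemma chain_split2_eval (f : ℕ → ℕ) {p m : ℕ} (h : p + 2 ≤ m)
    (hpre : ∀ d < p, f d = 0) (hsuf : ∀ d, p + 2 ≤ d → d < m → f d = 0) :
    chain ((List.range m).map f) = (f p + f (p + 1) / 2) / 2 ^ (p + 1) := by
  rw [map_range_split2 f h]
  rw [map_range_zero hpre]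
  rw [map_range_zero (f := fun d => f (d + (p + 2))) (fun d hd => hsuf _ (by omega) (by omega))]
  rw [show List.replicate p 0 ++ f p :: f (p + 1) :: List.replicate (m - p - 2) 0
    = (List.replicate p 0 ++ [f p, f (p + 1)]) ++ List.replicate (m - p - 2) 0 by simp]
  rw [chain_append_zeros _ _ (fun x hx => List.eq_of_mem_replicate hx)]
  rw [chain_pour, chain_replicate_zero_append]

lemma cutVal_congr {n : ℕ} (hn : 1 ≤ n) {E E' : ℕ → ℕ} (h : ∀ j < n, E j = E' j)
    {i : ℕ} (hi : i < n) : cutVal n E i = cutVal n E' i := by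
  unfold cutVal decL incL
  rw [map_range_congr (f := fun d => E (d + 1)) (g := fun d => E' (d + 1))
    (fun d hd => h (d + 1) (by omega))]
  rw [map_range_congr (f := fun d => E (n - 1 - d)) (g := fun d => E' (n - 1 - d))
    (fun d hd => h (n - 1 - d) (by omega))]
  rw [h 0 (by omega)]

lemma example_cuts {k : ℕ} (hk : 1 ≤ k) {a b : ℕ} (hab1 : 2 * a + b ≤ 2 ^ (k + 1) - 1)
    (hab2 : 2 * b + a ≤ 2 ^ (k + 1) - 1) :
    ∀ i < 2 * k + 1,
      cutVal (2 * k + 1) (fun j => if j = k then a else if j = k + 1 then b else 0) i = 0 := by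
  set F : ℕ → ℕ := fun j => if j = k then a else if j = k + 1 then b else 0 with hF
  have hpow : 2 ^ (k + 1) = 2 * 2 ^ k := by rw [pow_succ]; ring
  have hpk : 1 ≤ 2 ^ k := Nat.one_le_two_pow
  have hka : a < 2 ^ k := by omega
  have hkb : b < 2 ^ k := by omega
  have hab1' : a + b / 2 < 2 ^ k := by omega
  have hab2' : b + a / 2 < 2 ^ k := by omega
  have Fk : F k = a := by rw [hF]; simp
  have Fk1 : F (k + 1) = b := by rw [hF]; simp
  have Fzero : ∀ j, j ≠ k → j ≠ k + 1 → F j = 0 := by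
    intro j h1 h2; rw [hF]; simp only []; rw [if_neg h1, if_neg h2]
  intro i hi
  have hdec : chain (decL F i) = 0 := by
    rcases lt_trichotomy i k with hik | heq | hik
    · apply chain_zeros
      intro x hx
      unfold decL at hx
      rw [List.mem_map] at hx
      obtain ⟨d, hd, rfl⟩ := hx
      rw [List.mem_range] at hd
      exact Fzero _ (by omega) (by omega)
    · rw [heq]
      rw [show chain (decL F k) = chain (decL F ((k - 1) + 1)) by rw [show k - 1 + 1 = k by omega]]
      rw [decL_succ, show k - 1 + 1 = k by omega, Fk]
      have hpre : decL F (k - 1) = List.replicate (k - 1) 0 := by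
        unfold decL
        exact map_range_zero (fun d hd => Fzero _ (by omega) (by omega))
      rw [hpre, chain_replicate_zero_append, show k - 1 + 1 = k by omega]
      exact Nat.div_eq_of_lt hka
    · unfold decL
      rw [chain_split2_eval _ (show (k - 1) + 2 ≤ i by omega)
        (fun d hd => Fzero _ (by omega) (by omega))
        (fun d hd1 hd2 => Fzero _ (by omega) (by omega))]
      beta_reduce
      rw [show k - 1 + 1 = k by omega, Fk, Fk1]
      exact Nat.div_eq_of_lt hab1'
  have hinc : chain (incL (2 * k + 1) F i) = 0 := by
    rcases lt_trichotomy i k with hik | heq | hik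
    · unfold incL
      rw [chain_split2_eval _ (show (k - 1) + 2 ≤ 2 * k + 1 - 1 - i by omega)
        (fun d hd => Fzero _ (by omega) (by omega))
        (fun d hd1 hd2 => Fzero _ (by omega) (by omega))]
      beta_reduce
      rw [show 2 * k + 1 - 1 - (k - 1) = k + 1 by omega, Fk1]
      rw [show 2 * k + 1 - 1 - (k - 1 + 1) = k by omega, Fk]
      rw [show k - 1 + 1 = k by omega]
      exact Nat.div_eq_of_lt hab2'
    · rw [heq]
      rw [incL_last F (show k + 2 ≤ 2 * k + 1 by omega), Fk1]
      have hpre : incL (2 * k + 1) F (k + 1) = List.replicate (k - 1) 0 := by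
        unfold incL
        rw [show 2 * k + 1 - 1 - (k + 1) = k - 1 by omega]
        exact map_range_zero (fun d hd => Fzero _ (by omega) (by omega))
      rw [hpre, chain_replicate_zero_append, show k - 1 + 1 = k by omega]
      exact Nat.div_eq_of_lt hkb
    · apply chain_zeros
      intro x hx
      unfold incL at hx
      rw [List.mem_map] at hx
      obtain ⟨d, hd, rfl⟩ := hx
      rw [List.mem_range] at hd
      exact Fzero _ (by omega) (by omega)
  unfold cutVal
  rw [hdec, hinc, Fzero 0 (by omega) (by omega)]


end Example

section Final

lemma sum_toNat {n : ℕ} (Df : Fin n → ℕ) :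
    ∑ v : Fin n, Df v = ∑ j ∈ Finset.range n, toNat Df j := by
  rw [← Fin.sum_univ_eq_sum_range (fun j => toNat Df j) n]
  apply Finset.sum_congr rfl
  intro v _
  simp [toNat, v.isLt]

lemma upper {k : ℕ} (hk : 1 ≤ k) (Df : Fin (2 * k + 1) → ℕ)
    (hsum : (∑ v, Df v) = 2 * (2 ^ (k + 1) / 3) + 1) :
    Solvable (cycleGraph (2 * k + 1)) Df := by
  intro r
  have hn : 3 ≤ 2 * k + 1 := by omega
  set e := rotIso hn r with he
  have hcoe : ∀ x, e x = x + r := fun x => rfl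
  have her : e ⟨0, by omega⟩ = r := by
    rw [hcoe]
    apply Fin.ext
    rw [Fin.add_def]
    simp [Nat.mod_eq_of_lt r.isLt]
  have hreach : Reaches (cycleGraph (2 * k + 1)) (fun x => Df (e x)) ⟨0, by omega⟩ 1 := by
    have hex : ∃ i, i < 2 * k + 1 ∧ 1 ≤ cutVal (2 * k + 1) (toNat (fun x => Df (e x))) i := by
      by_contra hno
      push_neg at hno
      have hz : ∀ i < 2 * k + 1, cutVal (2 * k + 1) (toNat (fun x => Df (e x))) i = 0 := by
        intro i hi
        have := hno i hi
        omega
      have hcore := core hk hz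
      rw [← sum_toNat] at hcore
      have hs2 : ∑ v, Df (e v) = ∑ v, Df v := by
        simp only [hcoe]
        have := Equiv.sum_comp (Equiv.addRight r) Df
        simpa using this
      rw [hs2, hsum] at hcore
      omega
    obtain ⟨i, hi, hcv⟩ := hex
    exact soundness hn _ hi hcv
  have hfin := reaches_map e Df ⟨0, by omega⟩ 1 hreach
  rwa [her] at hfin

lemma lower {k : ℕ} (hk : 1 ≤ k) {m : ℕ} (hm : m ≤ 2 * (2 ^ (k + 1) / 3)) :
    ∃ Df : Fin (2 * k + 1) → ℕ, (∑ v, Df v) = m ∧ ¬Solvable (cycleGraph (2 * k + 1)) Df := by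
  have hn : 3 ≤ 2 * k + 1 := by omega
  set t := 2 ^ (k + 1) / 3 with ht
  have h3t : 3 * t ≤ 2 ^ (k + 1) - 1 := by
    have := pow_two_mod_three (k + 1)
    have h1 : 1 ≤ 2 ^ (k + 1) := Nat.one_le_two_pow
    omega
  set a := min m t with ha'
  set c := m - a with hc'
  have ha : a ≤ t := min_le_right _ _
  have hc : c ≤ t := by omega
  have hac : a + c = m := by omega
  have hab1 : 2 * a + c ≤ 2 ^ (k + 1) - 1 := by omega
  have hab2 : 2 * c + a ≤ 2 ^ (k + 1) - 1 := by omega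
  refine ⟨fun v => if v.val = k then a else if v.val = k + 1 then c else 0, ?_, ?_⟩
  · rw [Fin.sum_univ_eq_sum_range (fun j => if j = k then a else if j = k + 1 then c else 0)
      (2 * k + 1)]
    have hsub : ({k, k + 1} : Finset ℕ) ⊆ Finset.range (2 * k + 1) := by
      intro x hx
      simp only [Finset.mem_insert, Finset.mem_singleton] at hx
      rw [Finset.mem_range]
      omega
    rw [← Finset.sum_subset hsub (fun x hx hnx => by
      simp only [Finset.mem_insert, Finset.mem_singleton, not_or] at hnx
      rw [if_neg hnx.1, if_neg hnx.2])]
    rw [Finset.sum_pair (by omega : k ≠ k + 1)]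
    rw [if_pos rfl, if_neg (by omega), if_pos rfl]
    omega
  · intro hsolv
    have hre := hsolv ⟨0, by omega⟩
    apply not_reaches hn ?_ hre
    intro i hi
    rw [cutVal_congr (by omega)
      (E' := fun j => if j = k then a else if j = k + 1 then c else 0) ?_ hi]
    · exact example_cuts hk hab1 hab2 i hi
    · intro j hj
      simp [toNat, hj]

end Final

end Peb

theorem pebbling_number_odd_cycle (k : ℕ) (hk : 1 ≤ k) :
    pebNum (SimpleGraph.cycleGraph (2 * k + 1)) = 2 * (2 ^ (k + 1) / 3) + 1 := by
  unfold pebNum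
  apply le_antisymm
  · exact Nat.sInf_le (fun D hD => Peb.upper hk D hD)
  · apply le_csInf
    · exact ⟨2 * (2 ^ (k + 1) / 3) + 1, fun D hD => Peb.upper hk D hD⟩
    · intro b hb
      by_contra hlt
      push_neg at hlt
      obtain ⟨Df, hsum, hns⟩ := Peb.lower hk (m := b) (by omega)
      exact hns (hb Df hsum)
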